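/- Let G be a compact topological group and x ∈ G. Then ω(x) = ⋂_{n∈ℕ} closure{x^i : i ≥ n} is a nonempty closed subgroup of G. -/

import Mathlib

/-- In a compact topological group, the omega limit set of the powers of a point is a
nonempty closed subgroup. -/
theorem omega_limit_powers_subgroup {G : Type*} [Group G] [TopologicalSpace G]
    [IsTopologicalGroup G] [CompactSpace G] [T2Space G] (x : G) :
    (⋂ n : ℕ, closure {y : G | ∃ i : ℕ, n ≤ i ∧ y = x ^ i}).Nonempty ∧
    IsClosed (⋂ n : ℕ, closure {y : G | ∃ i : ℕ, n ≤ i ∧ y = x ^ i}) ∧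
    ∃ H : Subgroup G, (H : Set G) = ⋂ n : ℕ, closure {y : G | ∃ i : ℕ, n ≤ i ∧ y = x ^ i} := by
  set A : ℕ → Set G := fun n => {y : G | ∃ i : ℕ, n ≤ i ∧ y = x ^ i} with hA
  set S : ℕ → Set G := fun n => closure (A n) with hS
  have hclosed : ∀ n, IsClosed (S n) := fun n => isClosed_closure
  have hmono : ∀ i, S (i + 1) ⊆ S i := by
    intro i
    apply closure_mono
    rintro y ⟨j, hj, rfl⟩
    exact ⟨j, by omega, rfl⟩
  have hnonempty : ∀ n, (S n).Nonempty :=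
    fun n => ⟨x ^ n, subset_closure ⟨n, le_refl n, rfl⟩⟩
  have hΩne : (⋂ n, S n).Nonempty :=
    IsCompact.nonempty_iInter_of_sequence_nonempty_isCompact_isClosed S hmono hnonempty
      ((hclosed 0).isCompact) hclosed
  have hΩclosed : IsClosed (⋂ n, S n) := isClosed_iInter hclosed
  -- key: find powers in open neighborhoods
  have hfind : ∀ a : G, a ∈ (⋂ n, S n) → ∀ V : Set G, IsOpen V → a ∈ V →
      ∀ n : ℕ, ∃ i, n ≤ i ∧ x ^ i ∈ V := by
    intro a ha V hV haV n
    have h1 : a ∈ S n := Set.mem_iInter.1 ha n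
    rcases (mem_closure_iff.1 h1) V hV haV with ⟨y, hyV, i, hi, rfl⟩
    exact ⟨i, hi, hyV⟩
  -- multiplication
  have hmul : ∀ a b : G, a ∈ (⋂ n, S n) → b ∈ (⋂ n, S n) → a * b ∈ (⋂ n, S n) := by
    intro a b ha hb
    refine Set.mem_iInter.2 fun n => mem_closure_iff.2 fun U hU hab => ?_
    have hc : ContinuousAt (fun p : G × G => p.1 * p.2) (a, b) :=
      (continuous_mul).continuousAt
    have : (fun p : G × G => p.1 * p.2) ⁻¹' U ∈ nhds (a, b) :=
      hc.preimage_mem_nhds (hU.mem_nhds hab)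
    rcases mem_nhds_prod_iff'.1 this with ⟨V, W, hVo, haV, hWo, hbW, hVW⟩
    rcases hfind a ha V hVo haV n with ⟨i, hi, hxi⟩
    rcases hfind b hb W hWo hbW 0 with ⟨j, _, hxj⟩
    refine ⟨x ^ (i + j), ?_, ⟨i + j, by omega, rfl⟩⟩
    have := hVW (Set.mk_mem_prod hxi hxj)
    simpa [pow_add] using this
  -- inverses
  have hinv : ∀ a : G, a ∈ (⋂ n, S n) → a⁻¹ ∈ (⋂ n, S n) := by
    intro a ha
    refine Set.mem_iInter.2 fun n => mem_closure_iff.2 fun U hU hainv => ?_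
    have hc : ContinuousAt (fun p : G × G => p.2 * p.1⁻¹ * p.1⁻¹) (a, a) := by
      fun_prop
    have hval : (fun p : G × G => p.2 * p.1⁻¹ * p.1⁻¹) (a, a) = a⁻¹ := by
      simp [mul_assoc]
    have hm : (fun p : G × G => p.2 * p.1⁻¹ * p.1⁻¹) ⁻¹' U ∈ nhds (a, a) := by
      apply hc.preimage_mem_nhds
      simpa using hU.mem_nhds hainv
    rcases mem_nhds_prod_iff'.1 hm with ⟨V, W, hVo, haV, hWo, haW, hVW⟩
    rcases hfind a ha V hVo haV n with ⟨i, hi, hxi⟩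
    rcases hfind a ha W hWo haW (2 * i + n) with ⟨j, hj, hxj⟩
    refine ⟨x ^ (j - 2 * i), ?_, ⟨j - 2 * i, by omega, rfl⟩⟩
    have hmem := hVW (Set.mk_mem_prod hxi hxj)
    have hx : x ^ j * (x ^ i)⁻¹ * (x ^ i)⁻¹ = x ^ (j - 2 * i) := by
      rw [← zpow_natCast, ← zpow_natCast, ← zpow_natCast, ← zpow_neg, ← zpow_add, ← zpow_add]
      congr 1
      omega
    simpa [hx] using hmem
  -- one
  obtain ⟨a, haΩ⟩ := id hΩne
  have hone : (1 : G) ∈ (⋂ n, S n) := by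
    have := hmul a a⁻¹ haΩ (hinv a haΩ)
    simpa using this
  refine ⟨hΩne, hΩclosed,
    ⟨{ carrier := ⋂ n, S n
       mul_mem' := fun h1 h2 => hmul _ _ h1 h2
       one_mem' := hone
       inv_mem' := fun h => hinv _ h }, rfl⟩⟩
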